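/- Let F be a finite field of cardinality q = p^ℓ with λ ∈ F^×, λ ≠ ±1. Then the polynomial X² + 1 has a root in F if and only if q ≢ 3 (mod 4). Consequently, (Euclidean) self-dual 2-quasi λ-constacyclic codes of length 2n over F exist if and only if q ≢ 3 (mod 4). -/

import Mathlib

/-- The `λ`-constacyclic shift on `Fⁿ`. -/
def cshift {F : Type*} [Field F] {n : ℕ} [NeZero n] (lam : F) (a : Fin n → F) :
    Fin n → F :=
  fun i => (if i = 0 then lam else 1) * a (i - 1)

/-- The Galois inner product `⟨a,b⟩ = ∑ aᵢ bᵢ^e` on `Fⁿ × Fⁿ` (`e = 1` is the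
Euclidean inner product). -/
def gin {F : Type*} [Field F] {n : ℕ} (e : ℕ)
    (a b : (Fin n → F) × (Fin n → F)) : F :=
  (∑ i, a.1 i * b.1 i ^ e) + (∑ i, a.2 i * b.2 i ^ e)

open scoped Fin.CommRing

section Aux

variable {F : Type*} [Field F] {n : ℕ} [NeZero n] (lam : F)

lemma cshift_smul (α : F) (a : Fin n → F) :
    cshift lam (α • a) = α • cshift lam a := by
  funext i
  simp only [cshift, Pi.smul_apply, smul_eq_mul]
  ring

lemma cshift_iterate (m : ℕ) (i : Fin n) :
    ∃ k : ℕ, ∀ a : Fin n → F, (cshift lam)^[m] a i = lam ^ k * a (i - (m : Fin n)) := by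
  induction m generalizing i with
  | zero => exact ⟨0, fun a => by simp⟩
  | succ m ih =>
    obtain ⟨k, hk⟩ := ih i
    refine ⟨if i - (m : Fin n) = 0 then k + 1 else k, fun a => ?_⟩
    rw [Function.iterate_succ_apply, hk (cshift lam a)]
    have hsub : i - (m : Fin n) - 1 = i - ((m + 1 : ℕ) : Fin n) := by
      push_cast; ring
    simp only [cshift, hsub]
    by_cases h : i - (m : Fin n) = 0 <;> simp [h] <;> ring

lemma cshift_sum (a b : Fin n → F) :
    (∑ i, cshift lam a i * cshift lam b i)
      = (∑ i, a i * b i) + (lam ^ 2 - 1) * (a (0 - 1) * b (0 - 1)) := by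
  have key : ∀ i : Fin n, cshift lam a i * cshift lam b i
      = a (i - 1) * b (i - 1) + (if i = 0 then (lam ^ 2 - 1) * (a (0-1) * b (0-1)) else 0) := by
    intro i
    by_cases h : i = 0 <;> simp [cshift, h] <;> ring
  rw [Finset.sum_congr rfl (fun i _ => key i), Finset.sum_add_distrib,
    Finset.sum_ite_eq' Finset.univ (0 : Fin n)]
  simp only [Finset.mem_univ, if_pos]
  congr 1
  exact Fintype.sum_equiv (Equiv.subRight (1 : Fin n)) _ _ (fun i => rfl)

lemma gin_cshift (c d : (Fin n → F) × (Fin n → F)) :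
    gin 1 (cshift lam c.1, cshift lam c.2) (cshift lam d.1, cshift lam d.2)
      = gin 1 c d + (lam ^ 2 - 1)
          * (c.1 (0-1) * d.1 (0-1) + c.2 (0-1) * d.2 (0-1)) := by
  simp only [gin, pow_one, cshift_sum]
  ring

end Aux

theorem stmt_11 {F : Type*} [Field F] [Fintype F] {n : ℕ} [NeZero n]
    (lam : F) (hlam : lam ≠ 0) (h1 : lam ≠ 1) (h2 : lam ≠ -1) :
    ((∃ α : F, α ^ 2 + 1 = 0) ↔ ¬ Fintype.card F % 4 = 3) ∧
    ((∃ C : Submodule F ((Fin n → F) × (Fin n → F)),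
        (∀ c ∈ C, (cshift lam c.1, cshift lam c.2) ∈ C) ∧
        (C : Set ((Fin n → F) × (Fin n → F))) = {a | ∀ c ∈ C, gin 1 c a = 0}) ↔
      ¬ Fintype.card F % 4 = 3) := by
  have hroot : (∃ α : F, α ^ 2 + 1 = 0) ↔ ¬ Fintype.card F % 4 = 3 := by
    have hsq := FiniteField.isSquare_neg_one_iff (F := F)
    constructor
    · rintro ⟨α, hα⟩
      exact hsq.mp ⟨α, by linear_combination -hα⟩
    · intro h
      obtain ⟨r, hr⟩ := hsq.mpr h
      exact ⟨r, by linear_combination -hr⟩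
  refine ⟨hroot, ?_⟩
  rw [← hroot]
  constructor
  · -- existence of a self-dual code gives a square root of -1
    rintro ⟨C, hshift, hdual⟩
    have hmem : ∀ x, x ∈ C ↔ ∀ c ∈ C, gin 1 c x = 0 := by
      intro x
      have := Set.ext_iff.mp hdual x
      simpa using this
    have hgin0 : ∀ c ∈ C, ∀ d ∈ C, gin 1 c d = 0 := fun c hc d hd =>
      (hmem d).mp hd c hc
    -- the boundary terms vanish
    have hlamsq : lam ^ 2 - 1 ≠ 0 := by
      intro h
      have : (lam - 1) * (lam + 1) = 0 := by linear_combination h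
      rcases mul_eq_zero.mp this with h | h
      · exact h1 (by linear_combination h)
      · exact h2 (by linear_combination h)
    have hbound : ∀ c ∈ C, c.1 (0-1) ^ 2 + c.2 (0-1) ^ 2 = 0 := by
      intro c hc
      have h0 : gin 1 c c = 0 := hgin0 c hc c hc
      have h0' : gin 1 (cshift lam c.1, cshift lam c.2) (cshift lam c.1, cshift lam c.2) = 0 :=
        hgin0 _ (hshift c hc) _ (hshift c hc)
      rw [gin_cshift, h0] at h0'
      have hB : (lam ^ 2 - 1) * (c.1 (0-1) * c.1 (0-1) + c.2 (0-1) * c.2 (0-1)) = 0 := by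
        linear_combination h0'
      rcases mul_eq_zero.mp hB with h | h
      · exact absurd h hlamsq
      · linear_combination h
    -- C is nonzero
    have hCne : ∃ c ∈ C, c ≠ 0 := by
      by_contra hC
      push_neg at hC
      have : ((Pi.single (0 : Fin n) (1 : F), (0 : Fin n → F)) :
          (Fin n → F) × (Fin n → F)) ∈ C := by
        rw [hmem]
        intro c hc
        have := hC c hc
        subst this
        simp [gin]
      have h0 := congrFun (congrArg Prod.fst (hC _ this)) 0
      simp at h0
    obtain ⟨c, hc, hcne⟩ := hCne
    -- find a nonzero coordinate pair
    have : ∃ j, c.1 j ≠ 0 ∨ c.2 j ≠ 0 := by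
      by_contra h
      push_neg at h
      apply hcne
      ext i
      · exact (h i).1
      · exact (h i).2
    obtain ⟨j, hj⟩ := this
    -- shift it to position 0 - 1
    set z : Fin n := 0 - 1 with hz
    set m : ℕ := (z - j).val with hm
    have hmz : z - (m : Fin n) = j := by
      rw [hm, Fin.cast_val_eq_self]
      ring
    obtain ⟨k, hk⟩ := cshift_iterate lam m z
    -- the iterated shift of c is in C
    have hiter : ∀ l : ℕ, ((cshift lam)^[l] c.1, (cshift lam)^[l] c.2) ∈ C := by
      intro l
      induction l with
      | zero => simpa using hc
      | succ l ih =>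
        rw [Function.iterate_succ_apply', Function.iterate_succ_apply']
        exact hshift _ ih
    have hb := hbound _ (hiter m)
    simp only [hk c.1, hk c.2, hmz] at hb
    have hlk : lam ^ k ≠ 0 := pow_ne_zero _ hlam
    have hb' : c.1 j ^ 2 + c.2 j ^ 2 = 0 := by
      have h2k : (lam ^ k) ^ 2 ≠ 0 := pow_ne_zero _ hlk
      have hB : (lam ^ k) ^ 2 * (c.1 j ^ 2 + c.2 j ^ 2) = 0 := by
        linear_combination hb
      rcases mul_eq_zero.mp hB with h | h
      · exact absurd h h2k
      · exact h
    rcases hj with hj | hj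
    · refine ⟨c.2 j / c.1 j, ?_⟩
      field_simp
      linear_combination hb'
    · refine ⟨c.1 j / c.2 j, ?_⟩
      field_simp
      linear_combination hb'
  · -- construction from a square root of -1
    rintro ⟨α, hα⟩
    refine ⟨LinearMap.graph (α • (LinearMap.id : (Fin n → F) →ₗ[F] (Fin n → F))), ?_, ?_⟩
    · intro c hc
      rw [LinearMap.mem_graph_iff] at hc ⊢
      simp only [LinearMap.smul_apply, LinearMap.id_coe, id_eq] at hc ⊢
      rw [hc, cshift_smul]
    · ext x
      simp only [SetLike.mem_coe, LinearMap.mem_graph_iff, LinearMap.smul_apply,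
        LinearMap.id_coe, id_eq, Set.mem_setOf_eq]
      constructor
      · intro hx c hc
        simp only [gin, pow_one, hc, hx, Pi.smul_apply, smul_eq_mul]
        rw [← Finset.sum_add_distrib]
        apply Finset.sum_eq_zero
        intro i _
        linear_combination (c.1 i * x.1 i) * hα
      · intro hx
        funext j
        have hc : (((Pi.single j 1 : Fin n → F), α • (Pi.single j 1 : Fin n → F)) :
            (Fin n → F) × (Fin n → F)).2 = α • ((Pi.single j 1 : Fin n → F), α • (Pi.single j 1 : Fin n → F)).1 := rfl
        have := hx _ hc
        simp only [gin, pow_one] at this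
        have hs1 : ∑ i, (Pi.single j 1 : Fin n → F) i * x.1 i = x.1 j := by
          rw [Finset.sum_eq_single j] <;> simp +contextual [Pi.single_apply]
        have hs2 : ∑ i, (α • (Pi.single j 1 : Fin n → F)) i * x.2 i = α * x.2 j := by
          simp only [Pi.smul_apply, smul_eq_mul]
          rw [Finset.sum_eq_single j] <;> simp +contextual [Pi.single_apply]
        rw [hs1, hs2] at this
        simp only [Pi.smul_apply, smul_eq_mul]
        linear_combination x.2 j * hα - α * this
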